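/- Let X and Y be measurable spaces, let μ and ν be probability measures on X and Y respectively, and let π be a probability measure on X × Y with marginals μ and ν whose density with respect to μ ⊗ ν is bounded below by a constant α ∈ (0, 1]. Define (T b)(x) := E_π[b(Y) | X = x] and (S a)(y) := E_π[a(X) | Y = y]. Let ζ : X → ℝ and η : Y → ℝ be bounded measurable functions satisfying the compatibility condition ∫ ζ dμ = ∫ η dν. Then there exists a pair (a, b) of bounded measurable functions with ∫ b dν = 0 solving a + T b = ζ μ-almost everywhere and b + S a = η ν-almost everywhere; moreover the ν-centered component b of any such solution is unique up to ν-null sets. -/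

import Mathlib

open MeasureTheory ProbabilityTheory
open scoped ENNReal

namespace TiltingAux

variable {X Y : Type*} [MeasurableSpace X] [MeasurableSpace Y]

lemma integrable_of_bdd {Z : Type*} [MeasurableSpace Z] {μ : Measure Z} [IsFiniteMeasure μ]
    {f : Z → ℝ} (hm : Measurable f) {C : ℝ} (hb : ∀ z, |f z| ≤ C) : Integrable f μ :=
  (integrable_const C).mono' hm.aestronglyMeasurable (Filter.Eventually.of_forall fun z => by
    simpa using hb z)

lemma measurable_kint (κ : Kernel X Y) [IsSFiniteKernel κ] {b : Y → ℝ} (hb : Measurable b) :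
    Measurable fun x => ∫ y, b y ∂κ x :=
  (MeasureTheory.StronglyMeasurable.integral_kernel_prod_right
    (f := fun (_ : X) y => b y) (κ := κ)
    ((hb.comp measurable_snd).stronglyMeasurable)).measurable

lemma kint_bdd (κ : Kernel X Y) [IsMarkovKernel κ] {b : Y → ℝ} {C : ℝ}
    (hb : ∀ y, |b y| ≤ C) (x : X) : |∫ y, b y ∂κ x| ≤ C := by
  rw [← Real.norm_eq_abs]
  calc ‖∫ y, b y ∂κ x‖ ≤ C * ((κ x) Set.univ).toReal :=
        norm_integral_le_of_norm_le_const (Filter.Eventually.of_forall fun y => by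
          simpa using hb y)
    _ = C := by simp

lemma tsum_lintegral_ne_top {Z : Type*} [MeasurableSpace Z] (τ : Measure Z)
    [IsProbabilityMeasure τ] {f : ℕ → Z → ℝ} {c : ℕ → ℝ} (hc0 : ∀ n, 0 ≤ c n)
    (hcs : Summable c) (hb : ∀ n z, |f n z| ≤ c n) :
    ∑' n, ∫⁻ z, (‖f n z‖₊ : ℝ≥0∞) ∂τ ≠ ∞ := by
  have h1 : ∀ n, ∫⁻ z, (‖f n z‖₊ : ℝ≥0∞) ∂τ ≤ ENNReal.ofReal (c n) := fun n => by
    calc ∫⁻ z, (‖f n z‖₊ : ℝ≥0∞) ∂τ ≤ ∫⁻ _, ENNReal.ofReal (c n) ∂τ := by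
          refine lintegral_mono fun z => ?_
          rw [show ((‖f n z‖₊ : ℝ≥0∞)) = ENNReal.ofReal ‖f n z‖ from (ofReal_norm _).symm]
          exact ENNReal.ofReal_le_ofReal (by simpa [Real.norm_eq_abs] using hb n z)
      _ = ENNReal.ofReal (c n) := by simp
  refine ne_top_of_le_ne_top ?_ (ENNReal.tsum_le_tsum h1)
  rw [← ENNReal.ofReal_tsum_of_nonneg hc0 hcs]
  exact ENNReal.ofReal_ne_top

/-- marginal identity on the κ side: ∫ Tb dμ = ∫ b dν -/
lemma integral_T_marg {μ : Measure X} {ν : Measure Y} {π : Measure (X × Y)}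
    [IsProbabilityMeasure μ] [IsProbabilityMeasure π]
    (hν : π.map Prod.snd = ν) (κ : Kernel X Y) [IsMarkovKernel κ] (hκ : π = μ.compProd κ)
    {b : Y → ℝ} (hb : Measurable b) {C : ℝ} (hbC : ∀ y, |b y| ≤ C) :
    ∫ x, (∫ y, b y ∂κ x) ∂μ = ∫ y, b y ∂ν := by
  have hint : Integrable (fun z : X × Y => b z.2) (μ.compProd κ) := by
    rw [← hκ]; exact integrable_of_bdd (hb.comp measurable_snd) (fun z => hbC z.2)
  have h1 : ∫ z : X × Y, b z.2 ∂(μ.compProd κ) = ∫ x, (∫ y, b y ∂κ x) ∂μ :=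
    MeasureTheory.Measure.integral_compProd hint
  rw [← h1, ← hκ, ← hν, integral_map measurable_snd.aemeasurable hb.aestronglyMeasurable]

/-- marginal identity on the κ' side: ∫ Sa dν = ∫ a dμ -/
lemma integral_S_marg {μ : Measure X} {ν : Measure Y} {π : Measure (X × Y)}
    [IsProbabilityMeasure ν] [IsProbabilityMeasure π]
    (hμ : π.map Prod.fst = μ) (κ' : Kernel Y X) [IsMarkovKernel κ']
    (hκ' : π.map Prod.swap = ν.compProd κ')
    {a : X → ℝ} (ha : Measurable a) {C : ℝ} (haC : ∀ x, |a x| ≤ C) :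
    ∫ y, (∫ x, a x ∂κ' y) ∂ν = ∫ x, a x ∂μ := by
  have hint : Integrable (fun z : Y × X => a z.2) (ν.compProd κ') := by
    rw [← hκ']; exact integrable_of_bdd (ha.comp measurable_snd) (fun z => haC z.2)
  have h1 : ∫ z : Y × X, a z.2 ∂(ν.compProd κ') = ∫ y, (∫ x, a x ∂κ' y) ∂ν :=
    MeasureTheory.Measure.integral_compProd hint
  have h2 : ∫ z : Y × X, a z.2 ∂(π.map Prod.swap) = ∫ w : X × Y, a w.1 ∂π := by
    rw [integral_map (f := fun z : Y × X => a z.2) measurable_swap.aemeasurable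
      (Measurable.aestronglyMeasurable (by exact ha.comp measurable_snd))]
    simp
  have h3 : ∫ w : X × Y, a w.1 ∂π = ∫ x, a x ∂μ := by
    rw [← hμ, integral_map measurable_fst.aemeasurable ha.aestronglyMeasurable]
  rw [← h1, ← hκ', h2, h3]

/-- a μ-null set is κ'-null for ν-a.e. y -/
lemma kernel_null {μ : Measure X} {ν : Measure Y} {π : Measure (X × Y)}
    [SFinite ν]
    (hμ : π.map Prod.fst = μ) (κ' : Kernel Y X) [IsSFiniteKernel κ']
    (hκ' : π.map Prod.swap = ν.compProd κ')
    {N : Set X} (hNm : MeasurableSet N) (hN : μ N = 0) : ∀ᵐ y ∂ν, κ' y N = 0 := by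
  have h1 : (ν.compProd κ') ((Set.univ : Set Y) ×ˢ N) = ∫⁻ y, κ' y N ∂ν := by
    rw [MeasureTheory.Measure.compProd_apply_prod MeasurableSet.univ hNm]
    simp [Measure.restrict_univ]
  have h2 : (π.map Prod.swap) ((Set.univ : Set Y) ×ˢ N) = μ N := by
    rw [Measure.map_apply measurable_swap (MeasurableSet.univ.prod hNm)]
    have hpre : (Prod.swap : X × Y → Y × X) ⁻¹' ((Set.univ : Set Y) ×ˢ N)
        = (Prod.fst : X × Y → X) ⁻¹' N := by
      ext z; simp [Prod.swap]
    rw [hpre, ← Measure.map_apply measurable_fst hNm, hμ]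
  have h3 : ∫⁻ y, κ' y N ∂ν = 0 := by rw [← h1, ← hκ', h2, hN]
  have := (lintegral_eq_zero_iff (Kernel.measurable_coe κ' hNm)).mp h3
  filter_upwards [this] with y hy using hy

/-- per-function Doeblin lower bound -/
lemma kernel_lb (μ : Measure X) (ν : Measure Y)
    [IsProbabilityMeasure μ] [IsProbabilityMeasure ν]
    (κ : Kernel X Y) [IsMarkovKernel κ]
    {α : ℝ} (hα0 : 0 < α)
    {ρ : X × Y → ℝ≥0∞} (hρm : Measurable ρ)
    (hπρ : μ.compProd κ = (μ.prod ν).withDensity ρ)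
    (hρlb : ∀ᵐ z ∂(μ.prod ν), ENNReal.ofReal α ≤ ρ z)
    {G : Y → ℝ} (hGm : Measurable G) (hG0 : ∀ y, 0 ≤ G y) {C : ℝ} (hGb : ∀ y, G y ≤ C) :
    ∀ᵐ x ∂μ, α * ∫ y, G y ∂ν ≤ ∫ y, G y ∂(κ x) := by
  set G' : Y → ℝ≥0∞ := fun y => ENNReal.ofReal (G y) with hG'
  have hG'm : Measurable G' := ENNReal.measurable_ofReal.comp hGm
  have hG'le : ∀ y, G' y ≤ ENNReal.ofReal C := fun y => ENNReal.ofReal_le_ofReal (hGb y)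
  set f : X → ℝ≥0∞ := fun x => ∫⁻ y, G' y ∂κ x with hf
  have hfm : Measurable f := by
    exact Measurable.lintegral_kernel_prod_right (f := fun (_ : X) y => G' y)
      (hG'm.comp measurable_snd)
  set c : ℝ≥0∞ := ENNReal.ofReal α * ∫⁻ y, G' y ∂ν with hc
  have key : ∀ s : Set X, MeasurableSet s → μ s < ∞ →
      ∫⁻ x in s, c ∂μ ≤ ∫⁻ x in s, f x ∂μ := by
    intro s hs _
    have h1 : ∫⁻ x in s, f x ∂μ
        = ∫⁻ z in s ×ˢ (Set.univ : Set Y), G' z.2 ∂(μ.compProd κ) := by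
      rw [MeasureTheory.Measure.setLIntegral_compProd
        (show Measurable fun z : X × Y => G' z.2 from hG'm.comp measurable_snd) hs
        MeasurableSet.univ]
      simp [Measure.restrict_univ]
      rfl
    have h2 : ∫⁻ z in s ×ˢ (Set.univ : Set Y), G' z.2 ∂(μ.compProd κ)
        = ∫⁻ z in s ×ˢ (Set.univ : Set Y), ρ z * G' z.2 ∂(μ.prod ν) := by
      rw [hπρ, MeasureTheory.restrict_withDensity (hs.prod MeasurableSet.univ),
        lintegral_withDensity_eq_lintegral_mul _ hρm
          (show Measurable fun z : X × Y => G' z.2 from hG'm.comp measurable_snd)]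
      simp [Pi.mul_apply]
    have h3 : ∫⁻ z in s ×ˢ (Set.univ : Set Y), ENNReal.ofReal α * G' z.2 ∂(μ.prod ν)
        ≤ ∫⁻ z in s ×ˢ (Set.univ : Set Y), ρ z * G' z.2 ∂(μ.prod ν) := by
      refine lintegral_mono_ae ?_
      filter_upwards [ae_restrict_of_ae hρlb] with z hz
      exact mul_le_mul_left hz _
    have h4 : ∫⁻ z in s ×ˢ (Set.univ : Set Y), ENNReal.ofReal α * G' z.2 ∂(μ.prod ν)
        = ENNReal.ofReal α * (μ s * ∫⁻ y, G' y ∂ν) := by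
      rw [← Measure.prod_restrict s Set.univ, Measure.restrict_univ, lintegral_const_mul _
        (show Measurable fun z : X × Y => G' z.2 from hG'm.comp measurable_snd)]
      congr 1
      rw [MeasureTheory.lintegral_prod _
        ((show Measurable fun z : X × Y => G' z.2 from hG'm.comp measurable_snd).aemeasurable)]
      simp [lintegral_const, mul_comm]
    have h5 : ∫⁻ _ in s, c ∂μ = c * μ s := by simp [mul_comm]
    rw [h5, h1, h2]
    refine le_trans ?_ h3
    rw [h4, hc]
    exact le_of_eq (by ring)
  have := ae_le_of_forall_setLIntegral_le_of_sigmaFinite (f := fun _ => c) (g := f)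
    measurable_const key
  have hνfin : ∫⁻ y, G' y ∂ν ≠ ∞ := by
    refine ne_of_lt (lt_of_le_of_lt (lintegral_mono hG'le) ?_)
    simp [lintegral_const]
  filter_upwards [this] with x hx
  have hκfin : f x ≠ ∞ := by
    refine ne_of_lt (lt_of_le_of_lt (lintegral_mono hG'le) ?_)
    simp [lintegral_const]
  have e1 : ∫ y, G y ∂ν = (∫⁻ y, G' y ∂ν).toReal := by
    rw [integral_eq_lintegral_of_nonneg_ae (Filter.Eventually.of_forall hG0)
      hGm.aestronglyMeasurable]
  have e2 : ∫ y, G y ∂(κ x) = (f x).toReal := by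
    rw [integral_eq_lintegral_of_nonneg_ae (Filter.Eventually.of_forall hG0)
      hGm.aestronglyMeasurable]
  rw [e1, e2]
  calc α * (∫⁻ y, G' y ∂ν).toReal = c.toReal := by
        rw [hc, ENNReal.toReal_mul, ENNReal.toReal_ofReal hα0.le]
    _ ≤ (f x).toReal := ENNReal.toReal_mono hκfin hx

end TiltingAux

open TiltingAux

/-- Existence of a bounded measurable solution of the tilting linear system
`a + T b = ζ`, `b + S a = η` with the gauge `∫ b dν = 0`, together with
uniqueness (up to `ν`-null sets) of the `ν`-centered component, under the
Doeblin-type lower bound `π ≥ α · (μ ⊗ ν)` with `α ∈ (0, 1]` and the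
compatibility condition `∫ ζ dμ = ∫ η dν`. -/
theorem tilting_system_exists_unique_centered
    {X Y : Type*} [MeasurableSpace X] [MeasurableSpace Y]
    (μ : Measure X) (ν : Measure Y) (π : Measure (X × Y))
    [IsProbabilityMeasure μ] [IsProbabilityMeasure ν] [IsProbabilityMeasure π]
    (hμ : π.map Prod.fst = μ) (hν : π.map Prod.snd = ν)
    (α : ℝ) (hα0 : 0 < α) (hα1 : α ≤ 1)
    (ρ : X × Y → ℝ≥0∞) (hρm : Measurable ρ)
    (hπρ : π = (μ.prod ν).withDensity ρ)
    (hρlb : ∀ᵐ z ∂(μ.prod ν), ENNReal.ofReal α ≤ ρ z)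
    -- disintegration kernels realizing the conditional expectations
    (κ : Kernel X Y) [IsMarkovKernel κ] (hκ : π = μ.compProd κ)
    (κ' : Kernel Y X) [IsMarkovKernel κ'] (hκ' : π.map Prod.swap = ν.compProd κ')
    -- the data of the linear system
    (ζ : X → ℝ) (η : Y → ℝ) (hζm : Measurable ζ) (hηm : Measurable η)
    (Cζ : ℝ) (hζb : ∀ x, |ζ x| ≤ Cζ) (Cη : ℝ) (hηb : ∀ y, |η y| ≤ Cη)
    (hcompat : ∫ x, ζ x ∂μ = ∫ y, η y ∂ν) :
    (∃ a : X → ℝ, ∃ b : Y → ℝ,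
      Measurable a ∧ (∃ C, ∀ x, |a x| ≤ C) ∧
      Measurable b ∧ (∃ C, ∀ y, |b y| ≤ C) ∧
      (∫ y, b y ∂ν) = 0 ∧
      (fun x => a x + ∫ y, b y ∂(κ x)) =ᵐ[μ] ζ ∧
      (fun y => b y + ∫ x, a x ∂(κ' y)) =ᵐ[ν] η)
    ∧ (∀ (a₁ a₂ : X → ℝ) (b₁ b₂ : Y → ℝ),
        Measurable a₁ → (∃ C, ∀ x, |a₁ x| ≤ C) →
        Measurable b₁ → (∃ C, ∀ y, |b₁ y| ≤ C) →
        (∫ y, b₁ y ∂ν) = 0 →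
        (fun x => a₁ x + ∫ y, b₁ y ∂(κ x)) =ᵐ[μ] ζ →
        (fun y => b₁ y + ∫ x, a₁ x ∂(κ' y)) =ᵐ[ν] η →
        Measurable a₂ → (∃ C, ∀ x, |a₂ x| ≤ C) →
        Measurable b₂ → (∃ C, ∀ y, |b₂ y| ≤ C) →
        (∫ y, b₂ y ∂ν) = 0 →
        (fun x => a₂ x + ∫ y, b₂ y ∂(κ x)) =ᵐ[μ] ζ →
        (fun y => b₂ y + ∫ x, a₂ x ∂(κ' y)) =ᵐ[ν] η →
        b₁ =ᵐ[ν] b₂) := by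
  have hπρ' : μ.compProd κ = (μ.prod ν).withDensity ρ := hκ.symm.trans hπρ
  have hq0 : (0:ℝ) ≤ 1 - α := by linarith
  have hq1 : (1:ℝ) - α < 1 := by linarith
  have hXne : Nonempty X := by
    by_contra h
    rw [not_nonempty_iff] at h
    have h1 : μ Set.univ = 1 := measure_univ
    rw [Set.univ_eq_empty_iff.mpr h] at h1
    simp at h1
  have hYne : Nonempty Y := by
    by_contra h
    rw [not_nonempty_iff] at h
    have h1 : ν Set.univ = 1 := measure_univ
    rw [Set.univ_eq_empty_iff.mpr h] at h1
    simp at h1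
  have hCζ0 : 0 ≤ Cζ := (abs_nonneg _).trans (hζb (Classical.arbitrary X))
  have hCη0 : 0 ≤ Cη := (abs_nonneg _).trans (hηb (Classical.arbitrary Y))
  set K0 : ℝ := Cζ + Cη with hK0def
  have hK0 : 0 ≤ K0 := by positivity
  have hcn : ∀ n : ℕ, (0:ℝ) ≤ (1-α)^n * K0 := fun n => mul_nonneg (pow_nonneg hq0 n) hK0
  have hcsum : Summable (fun n : ℕ => (1-α)^n * K0) :=
    (summable_geometric_of_lt_one hq0 hq1).mul_right K0
  -- the seed
  set g : Y → ℝ := fun y => η y - ∫ x, ζ x ∂κ' y with hgdef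
  have hgm : Measurable g := hηm.sub (measurable_kint κ' hζm)
  have hgb : ∀ y, |g y| ≤ K0 := by
    intro y
    calc |g y| ≤ |η y| + |∫ x, ζ x ∂κ' y| := abs_sub _ _
      _ ≤ Cη + Cζ := add_le_add (hηb y) (kint_bdd κ' hζb y)
      _ = K0 := by rw [hK0def]; ring
  have hg0 : ∫ y, g y ∂ν = 0 := by
    rw [hgdef]
    rw [integral_sub (integrable_of_bdd hηm hηb)
      (integrable_of_bdd (measurable_kint κ' hζm) (kint_bdd κ' hζb)),
      integral_S_marg hμ κ' hκ' hζm hζb, hcompat]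
    ring
  -- the iterates
  set r : ℕ → Y → ℝ := fun n => Nat.rec g (fun n rn => fun y =>
      max (-((1-α)^(n+1) * K0))
        (min (∫ x, (∫ y', rn y' ∂κ x) ∂κ' y) ((1-α)^(n+1) * K0))) n with hrdef
  have hr0 : r 0 = g := rfl
  have hrS : ∀ n, r (n+1) = fun y =>
      max (-((1-α)^(n+1) * K0))
        (min (∫ x, (∫ y', r n y' ∂κ x) ∂κ' y) ((1-α)^(n+1) * K0)) := fun n => rfl
  -- the inductive step
  have step : ∀ n, Measurable (r n) → (∀ y, |r n y| ≤ (1-α)^n * K0) →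
      (∫ y, r n y ∂ν = 0) →
      Measurable (r (n+1)) ∧ (∀ y, |r (n+1) y| ≤ (1-α)^(n+1) * K0) ∧
      (r (n+1) =ᵐ[ν] fun y => ∫ x, (∫ y', r n y' ∂κ x) ∂κ' y) ∧
      ∫ y, r (n+1) y ∂ν = 0 := by
    intro n hm hb h0
    set c : ℝ := (1-α)^(n+1) * K0 with hcdef
    have hc0 : 0 ≤ c := hcn (n+1)
    have hhm : Measurable fun x => ∫ y', r n y' ∂κ x := measurable_kint κ hm
    have hhb : ∀ x, |∫ y', r n y' ∂κ x| ≤ (1-α)^n * K0 := kint_bdd κ hb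
    -- a.e. upper bound
    have hup : ∀ᵐ x ∂μ, ∫ y', r n y' ∂κ x ≤ c := by
      have hlb := kernel_lb μ ν κ hα0 hρm hπρ' hρlb
        (G := fun y => (1-α)^n * K0 - r n y)
        (measurable_const.sub hm)
        (fun y => by have := (abs_le.mp (hb y)).2; linarith)
        (C := 2 * ((1-α)^n * K0))
        (fun y => by have := (abs_le.mp (hb y)).1; linarith)
      have hint : Integrable (r n) ν := integrable_of_bdd hm hb
      filter_upwards [hlb] with x hx
      have hintx : Integrable (r n) (κ x) := integrable_of_bdd hm hb
      rw [integral_sub (integrable_const _) hint, integral_sub (integrable_const _) hintx,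
        h0] at hx
      simp only [integral_const, measure_univ, ENNReal.toReal_one, probReal_univ, one_smul, sub_zero] at hx
      have hpow : (1-α)^(n+1) = (1-α)^n * (1-α) := pow_succ _ _
      rw [hcdef]
      nlinarith [hx]
    have hdn : ∀ᵐ x ∂μ, -c ≤ ∫ y', r n y' ∂κ x := by
      have hlb := kernel_lb μ ν κ hα0 hρm hπρ' hρlb
        (G := fun y => (1-α)^n * K0 + r n y)
        (measurable_const.add hm)
        (fun y => by have := (abs_le.mp (hb y)).1; linarith)
        (C := 2 * ((1-α)^n * K0))
        (fun y => by have := (abs_le.mp (hb y)).2; linarith)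
      have hint : Integrable (r n) ν := integrable_of_bdd hm hb
      filter_upwards [hlb] with x hx
      have hintx : Integrable (r n) (κ x) := integrable_of_bdd hm hb
      rw [integral_add (integrable_const _) hint, integral_add (integrable_const _) hintx,
        h0] at hx
      simp only [integral_const, measure_univ, ENNReal.toReal_one, probReal_univ, one_smul, add_zero] at hx
      have hpow : (1-α)^(n+1) = (1-α)^n * (1-α) := pow_succ _ _
      rw [hcdef]
      nlinarith [hx]
    have habs : ∀ᵐ x ∂μ, |∫ y', r n y' ∂κ x| ≤ c := by
      filter_upwards [hup, hdn] with x h1 h2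
      exact abs_le.mpr ⟨h2, h1⟩
    -- transport the null set through κ'
    set N : Set X := {x | ¬ (|∫ y', r n y' ∂κ x| ≤ c)} with hNdef
    have hNm : MeasurableSet N := (measurableSet_le hhm.abs measurable_const).compl
    have hNnull : μ N = 0 := ae_iff.mp habs
    have hker : ∀ᵐ y ∂ν, κ' y N = 0 := kernel_null hμ κ' hκ' hNm hNnull
    have hae : r (n+1) =ᵐ[ν] fun y => ∫ x, (∫ y', r n y' ∂κ x) ∂κ' y := by
      filter_upwards [hker] with y hy
      have hb' : ∀ᵐ x ∂κ' y, ‖∫ y', r n y' ∂κ x‖ ≤ c := by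
        have : ∀ᵐ x ∂κ' y, x ∉ N := by
          rw [ae_iff]
          simpa [hNdef] using hy
        filter_upwards [this] with x hx
        simp only [hNdef, Set.mem_setOf_eq, not_not] at hx
        simpa [Real.norm_eq_abs] using hx
      have hI : |∫ x, (∫ y', r n y' ∂κ x) ∂κ' y| ≤ c := by
        rw [← Real.norm_eq_abs]
        calc ‖∫ x, (∫ y', r n y' ∂κ x) ∂κ' y‖ ≤ c * ((κ' y) Set.univ).toReal :=
              norm_integral_le_of_norm_le_const hb'
          _ = c := by simp
      show max (-c) (min (∫ x, (∫ y', r n y' ∂κ x) ∂κ' y) c)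
          = ∫ x, (∫ y', r n y' ∂κ x) ∂κ' y
      rw [min_eq_left (abs_le.mp hI).2, max_eq_right (abs_le.mp hI).1]
    refine ⟨?_, ?_, hae, ?_⟩
    · rw [hrS n]
      exact measurable_const.max ((measurable_kint κ' hhm).min measurable_const)
    · intro y
      show |max (-c) (min (∫ x, (∫ y', r n y' ∂κ x) ∂κ' y) c)| ≤ c
      refine abs_le.mpr ⟨le_max_left _ _, max_le (by linarith) (min_le_right _ _)⟩
    · rw [integral_congr_ae hae, integral_S_marg hμ κ' hκ' hhm hhb,
        integral_T_marg hν κ hκ hm hb, h0]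

  have key : ∀ n, Measurable (r n) ∧ (∀ y, |r n y| ≤ (1-α)^n * K0) ∧ ∫ y, r n y ∂ν = 0 := by
    intro n
    induction n with
    | zero =>
      refine ⟨hgm, ?_, hg0⟩
      intro y; simpa [hr0] using hgb y
    | succ n ih =>
      obtain ⟨h1, h2, h3⟩ := ih
      obtain ⟨m, bb, _, cc⟩ := step n h1 h2 h3
      exact ⟨m, bb, cc⟩
  have hE : ∀ n, r (n+1) =ᵐ[ν] fun y => ∫ x, (∫ y', r n y' ∂κ x) ∂κ' y :=
    fun n => (step n (key n).1 (key n).2.1 (key n).2.2).2.2.1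
  -- summability and definition of b
  have hsum : ∀ y, Summable fun n => r n y := fun y =>
    Summable.of_norm_bounded hcsum (fun n => by
      simpa [Real.norm_eq_abs] using (key n).2.1 y)
  set b : Y → ℝ := fun y => ∑' n, r n y with hbdef
  have hbm : Measurable b := by
    refine measurable_of_tendsto_metrizable
      (f := fun N => fun y => ∑ n ∈ Finset.range N, r n y)
      (fun N => Finset.measurable_sum _ fun n _ => (key n).1) ?_
    rw [tendsto_pi_nhds]
    intro y
    exact (hsum y).hasSum.tendsto_sum_nat
  set B0 : ℝ := ∑' n : ℕ, (1-α)^n * K0 with hB0def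
  have hbb : ∀ y, |b y| ≤ B0 := by
    intro y
    rw [← Real.norm_eq_abs]
    refine (norm_tsum_le_tsum_norm ((hsum y).abs.congr ?_)).trans
      (Summable.tsum_le_tsum (fun n => by simpa [Real.norm_eq_abs] using (key n).2.1 y)
        ((hsum y).abs.congr ?_) hcsum)
    all_goals intro n; simp [Real.norm_eq_abs]
  have hb0 : ∫ y, b y ∂ν = 0 := by
    rw [hbdef]
    rw [integral_tsum (fun n => ((key n).1).aestronglyMeasurable)
      (tsum_lintegral_ne_top ν hcn hcsum (fun n y => (key n).2.1 y))]
    have : ∀ n : ℕ, ∫ y, r n y ∂ν = 0 := fun n => (key n).2.2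
    rw [tsum_congr this, tsum_zero]
    -- interchange of sum and kernel integrals
  have hTb : ∀ x, (∫ y, b y ∂κ x) = ∑' n, ∫ y', r n y' ∂κ x := by
    intro x
    rw [hbdef]
    exact integral_tsum (fun n => ((key n).1).aestronglyMeasurable)
      (tsum_lintegral_ne_top (κ x) hcn hcsum (fun n y => (key n).2.1 y))
  have hhm : ∀ n, Measurable fun x => ∫ y', r n y' ∂κ x := fun n => measurable_kint κ (key n).1
  have hhb : ∀ n x, |∫ y', r n y' ∂κ x| ≤ (1-α)^n * K0 := fun n => kint_bdd κ (key n).2.1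
  have hSTb : ∀ y, (∫ x, (∫ y', b y' ∂κ x) ∂κ' y)
      = ∑' n, ∫ x, (∫ y', r n y' ∂κ x) ∂κ' y := by
    intro y
    have h1 : (fun x => ∫ y', b y' ∂κ x) = fun x => ∑' n, ∫ y', r n y' ∂κ x := funext hTb
    rw [h1]
    exact integral_tsum (fun n => (hhm n).aestronglyMeasurable)
      (tsum_lintegral_ne_top (κ' y) hcn hcsum hhb)
  have hbid : ∀ᵐ y ∂ν, b y = g y + ∫ x, (∫ y', b y' ∂κ x) ∂κ' y := by
    filter_upwards [ae_all_iff.mpr hE] with y hy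
    have h1 : b y = r 0 y + ∑' n, r (n+1) y := Summable.tsum_eq_zero_add (hsum y)
    rw [h1, hSTb y, hr0]
    congr 1
    exact tsum_congr fun n => hy n
  -- definition of a
  set a : X → ℝ := fun x => ζ x - ∫ y, b y ∂κ x with hadef
  have ham : Measurable a := hζm.sub (measurable_kint κ hbm)
  have haB : ∀ x, |a x| ≤ Cζ + B0 := fun x => by
    calc |a x| ≤ |ζ x| + |∫ y, b y ∂κ x| := abs_sub _ _
      _ ≤ Cζ + B0 := add_le_add (hζb x) (kint_bdd κ hbb x)
  constructor
  · refine ⟨a, b, ham, ⟨Cζ + B0, haB⟩, hbm, ⟨B0, hbb⟩, hb0, ?_, ?_⟩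
    · refine Filter.Eventually.of_forall fun x => ?_
      show a x + ∫ y, b y ∂κ x = ζ x
      simp only [hadef]
      ring
    · filter_upwards [hbid] with y hy
      show b y + ∫ x, a x ∂κ' y = η y
      have h1 : ∫ x, a x ∂κ' y
          = ∫ x, ζ x ∂κ' y - ∫ x, (∫ y', b y' ∂κ x) ∂κ' y := by
        rw [hadef]
        exact integral_sub (integrable_of_bdd hζm hζb)
          (integrable_of_bdd (measurable_kint κ hbm) (kint_bdd κ hbb))
      have hgy : g y = η y - ∫ x, ζ x ∂κ' y := rfl
      rw [h1]
      linarith [hy, hgy]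
  -- uniqueness
  · intro a₁ a₂ b₁ b₂ ha₁m ha₁b hb₁m hb₁b h₁0 h₁e1 h₁e2 ha₂m ha₂b hb₂m hb₂b h₂0 h₂e1 h₂e2
    obtain ⟨C₁, hC₁⟩ := ha₁b
    obtain ⟨D₁, hD₁⟩ := hb₁b
    obtain ⟨C₂, hC₂⟩ := ha₂b
    obtain ⟨D₂, hD₂⟩ := hb₂b
    set d : Y → ℝ := fun y => b₁ y - b₂ y with hddef
    set e : X → ℝ := fun x => a₂ x - a₁ x with hedef
    have hdm : Measurable d := hb₁m.sub hb₂m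
    have hem : Measurable e := ha₂m.sub ha₁m
    have hdb : ∀ y, |d y| ≤ D₁ + D₂ := fun y =>
      (abs_sub _ _).trans (add_le_add (hD₁ y) (hD₂ y))
    have heb : ∀ x, |e x| ≤ C₂ + C₁ := fun x =>
      (abs_sub _ _).trans (add_le_add (hC₂ x) (hC₁ x))
    have hdabs_b : ∀ y, |(fun y => |d y|) y| ≤ D₁ + D₂ := fun y => by
      rw [abs_abs]; exact hdb y
    have heabs_b : ∀ x, |(fun x => |e x|) x| ≤ C₂ + C₁ := fun x => by
      rw [abs_abs]; exact heb x
    have hd0 : ∫ y, d y ∂ν = 0 := by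
      rw [hddef, integral_sub (integrable_of_bdd hb₁m hD₁) (integrable_of_bdd hb₂m hD₂),
        h₁0, h₂0]
      ring
    have hdae : d =ᵐ[ν] fun y => ∫ x, e x ∂κ' y := by
      filter_upwards [h₁e2, h₂e2] with y hy1 hy2
      have h1 : ∫ x, e x ∂κ' y = ∫ x, a₂ x ∂κ' y - ∫ x, a₁ x ∂κ' y := by
        rw [hedef]
        exact integral_sub (integrable_of_bdd ha₂m hC₂) (integrable_of_bdd ha₁m hC₁)
      show d y = ∫ x, e x ∂κ' y
      rw [h1, hddef]
      dsimp only
      linarith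
    have heae : e =ᵐ[μ] fun x => ∫ y, d y ∂κ x := by
      filter_upwards [h₁e1, h₂e1] with x hx1 hx2
      have h1 : ∫ y, d y ∂κ x = ∫ y, b₁ y ∂κ x - ∫ y, b₂ y ∂κ x := by
        rw [hddef]
        exact integral_sub (integrable_of_bdd hb₁m hD₁) (integrable_of_bdd hb₂m hD₂)
      show e x = ∫ y, d y ∂κ x
      rw [h1, hedef]
      dsimp only
      linarith
    set I : ℝ := ∫ y, |d y| ∂ν with hIdef
    have hI0 : 0 ≤ I := integral_nonneg fun y => abs_nonneg _
    have hTd : ∀ᵐ x ∂μ, |∫ y, d y ∂κ x| ≤ (∫ y, |d y| ∂κ x) - α * I := by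
      have hplus := kernel_lb μ ν κ hα0 hρm hπρ' hρlb
        (G := fun y => |d y| + d y) (hdm.abs.add hdm)
        (fun y => by have := neg_abs_le (d y); linarith)
        (C := 2*(D₁+D₂))
        (fun y => by have h := le_abs_self (d y); have := hdb y; linarith)
      have hminus := kernel_lb μ ν κ hα0 hρm hπρ' hρlb
        (G := fun y => |d y| - d y) (hdm.abs.sub hdm)
        (fun y => by have := le_abs_self (d y); linarith)
        (C := 2*(D₁+D₂))
        (fun y => by have := neg_abs_le (d y); have := hdb y; linarith)
      have hidν : Integrable d ν := integrable_of_bdd hdm hdb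
      have hiaν : Integrable (fun y => |d y|) ν := integrable_of_bdd hdm.abs hdabs_b
      filter_upwards [hplus, hminus] with x h1 h2
      have hia : Integrable (fun y => |d y|) (κ x) := integrable_of_bdd hdm.abs hdabs_b
      have hid : Integrable d (κ x) := integrable_of_bdd hdm hdb
      rw [integral_add hiaν hidν, hd0, integral_add hia hid] at h1
      rw [integral_sub hiaν hidν, hd0, integral_sub hia hid] at h2
      rw [abs_le]
      constructor
      · linarith
      · linarith
    have c1 : I = ∫ y, |∫ x, e x ∂κ' y| ∂ν := by
      rw [hIdef]
      refine integral_congr_ae ?_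
      filter_upwards [hdae] with y hy
      rw [hy]
    have c2 : ∫ y, |∫ x, e x ∂κ' y| ∂ν ≤ ∫ y, (∫ x, |e x| ∂κ' y) ∂ν := by
      refine integral_mono
        (integrable_of_bdd (measurable_kint κ' hem).abs
          (fun y => by rw [abs_abs]; exact kint_bdd κ' heb y))
        (integrable_of_bdd (measurable_kint κ' hem.abs) (kint_bdd κ' heabs_b))
        (fun y => by
          simpa [Real.norm_eq_abs] using
            norm_integral_le_integral_norm (μ := κ' y) e)
    have c3 : ∫ y, (∫ x, |e x| ∂κ' y) ∂ν = ∫ x, |e x| ∂μ :=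
      integral_S_marg hμ κ' hκ' hem.abs heabs_b
    have c4 : ∫ x, |e x| ∂μ = ∫ x, |∫ y, d y ∂κ x| ∂μ := by
      refine integral_congr_ae ?_
      filter_upwards [heae] with x hx
      rw [hx]
    have c5 : ∫ x, |∫ y, d y ∂κ x| ∂μ ≤ ∫ x, ((∫ y, |d y| ∂κ x) - α * I) ∂μ := by
      refine integral_mono_ae
        (integrable_of_bdd (measurable_kint κ hdm).abs
          (fun x => by rw [abs_abs]; exact kint_bdd κ hdb x))
        (Integrable.sub
          (integrable_of_bdd (measurable_kint κ hdm.abs) (kint_bdd κ hdabs_b))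
          (integrable_const _))
        hTd
    have c6 : ∫ x, ((∫ y, |d y| ∂κ x) - α * I) ∂μ = I - α * I := by
      rw [integral_sub
        (integrable_of_bdd (measurable_kint κ hdm.abs) (kint_bdd κ hdabs_b))
        (integrable_const _),
        integral_T_marg hν κ hκ hdm.abs hdabs_b, integral_const]
      simp [measure_univ, probReal_univ]
      rfl
    have hIle : I ≤ I - α * I := by
      calc I = ∫ y, |∫ x, e x ∂κ' y| ∂ν := c1
        _ ≤ ∫ y, (∫ x, |e x| ∂κ' y) ∂ν := c2
        _ = ∫ x, |e x| ∂μ := c3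
        _ = ∫ x, |∫ y, d y ∂κ x| ∂μ := c4
        _ ≤ ∫ x, ((∫ y, |d y| ∂κ x) - α * I) ∂μ := c5
        _ = I - α * I := c6
    have hIzero : I = 0 := by nlinarith
    have habs0 : (fun y => |d y|) =ᵐ[ν] 0 :=
      (integral_eq_zero_iff_of_nonneg_ae
        (Filter.Eventually.of_forall fun y => abs_nonneg (d y))
        (integrable_of_bdd hdm.abs hdabs_b)).mp hIzero
    filter_upwards [habs0] with y hy
    have h1 : |d y| = 0 := hy
    have h2 : d y = 0 := abs_eq_zero.mp h1
    have h3 : b₁ y - b₂ y = 0 := h2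
    linarith
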